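/- Let OPT, B > 0 and let w_1,…,w_G be reals with 0 ≤ w_i ≤ OPT/B for all i and OPT/2 ≤ Σ_{i=1}^G w_i ≤ OPT. Let K ≥ 1 and let ξ_1,…,ξ_G be independent Bernoulli random variables each equal to 1 with probability 1/K. Then Pr( Σ_{i=1}^G ξ_i·w_i < OPT/(4K) ) ≤ 2·exp( −3B/(104K) ). -/

import Mathlib

open MeasureTheory
open scoped ENNReal

set_option maxHeartbeats 1000000 in
lemma exp_neg_le_quad {x : ℝ} (hx : 0 ≤ x) : Real.exp (-x) ≤ 1 - x + x ^ 2 := by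
  have h1 : (1 + x) * Real.exp (-x) ≤ 1 := by
    calc (1 + x) * Real.exp (-x) ≤ Real.exp x * Real.exp (-x) :=
          mul_le_mul_of_nonneg_right (by linarith [Real.add_one_le_exp x]) (Real.exp_pos _).le
      _ = 1 := by rw [← Real.exp_add]; simp
  nlinarith [Real.exp_pos (-x), pow_nonneg hx 3, sq_nonneg x]

set_option maxHeartbeats 1000000 in
theorem bernoulli_value_concentration
    (G : ℕ) (OPT B K : ℝ) (hOPT : 0 < OPT) (hB : 0 < B) (hK : 1 ≤ K)
    (w : Fin G → ℝ) (hw0 : ∀ i, 0 ≤ w i) (hw1 : ∀ i, w i ≤ OPT / B)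
    (hsum1 : OPT / 2 ≤ ∑ i, w i) (hsum2 : ∑ i, w i ≤ OPT) :
    (Measure.pi fun _ : Fin G =>
        (PMF.bernoulli (Real.toNNReal (1 / K))
          (by
            have h1 : (1 : ℝ) / K ≤ 1 := by
              rw [div_le_one (lt_of_lt_of_le one_pos hK)]; exact hK
            simpa using Real.toNNReal_le_toNNReal h1)).toMeasure)
      {ξ : Fin G → Bool | ∑ i, (if ξ i then w i else 0) < OPT / (4 * K)}
      ≤ ENNReal.ofReal (2 * Real.exp (-(3 * B) / (104 * K))) := by
  have hK0 : (0 : ℝ) < K := lt_of_lt_of_le one_pos hK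
  have hp0 : (0 : ℝ) < 1 / K := by positivity
  have hp1 : (1 : ℝ) / K ≤ 1 := by rw [div_le_one hK0]; exact hK
  have hle : Real.toNNReal (1 / K) ≤ 1 := by
    simpa using Real.toNNReal_le_toNNReal hp1
  letI : MeasureSpace Bool := ⟨(PMF.bernoulli (Real.toNNReal (1 / K)) hle).toMeasure⟩
  haveI : IsProbabilityMeasure (volume : Measure Bool) :=
    PMF.toMeasure.isProbabilityMeasure _
  set s : ℝ := B / (4 * OPT) with hs_def
  have hs0 : 0 < s := by positivity
  set t : ℝ := OPT / (4 * K) with ht_def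
  set S : (Fin G → Bool) → ℝ := fun ξ => ∑ i, (if ξ i then w i else 0) with hS_def
  have hSmeas : Measurable S := by
    rw [hS_def]
    exact Finset.measurable_sum Finset.univ fun i _ =>
      (measurable_of_countable (fun b : Bool => if b then w i else 0)).comp
        (measurable_pi_apply i)
  set f : (Fin G → Bool) → ℝ := fun ξ => Real.exp (s * t) * Real.exp (-(s * S ξ)) with hf_def
  have hf_meas : Measurable f :=
    measurable_const.mul (((hSmeas.const_mul s).neg).exp)
  have hf_pos : ∀ ξ, 0 < f ξ := fun ξ => by positivity
  -- Step 1: Markov / Chernoff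
  have step1 : (volume : Measure (Fin G → Bool)) {ξ | S ξ < t}
      ≤ ∫⁻ ξ, ENNReal.ofReal (f ξ) := by
    have hsub : {ξ : Fin G → Bool | S ξ < t} ⊆ {ξ | 1 ≤ ENNReal.ofReal (f ξ)} := by
      intro ξ hξ
      simp only [Set.mem_setOf_eq] at hξ ⊢
      rw [ENNReal.one_le_ofReal]
      have h0 : (0 : ℝ) < s * t - s * S ξ := by
        have := mul_lt_mul_of_pos_left hξ hs0
        linarith
      calc (1 : ℝ) = Real.exp 0 := Real.exp_zero.symm
        _ ≤ Real.exp (s * t - s * S ξ) := Real.exp_le_exp.mpr h0.le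
        _ = f ξ := by
            rw [show s * t - s * S ξ = s * t + -(s * S ξ) by ring, Real.exp_add]
    calc (volume : Measure (Fin G → Bool)) {ξ | S ξ < t}
        ≤ volume {ξ | 1 ≤ ENNReal.ofReal (f ξ)} := measure_mono hsub
      _ ≤ ∫⁻ ξ, ENNReal.ofReal (f ξ) := by
          simpa using mul_meas_ge_le_lintegral₀
            (f := fun ξ => ENNReal.ofReal (f ξ))
            ((ENNReal.measurable_ofReal.comp hf_meas).aemeasurable) 1
  -- Step 2: lintegral = ofReal of Bochner integral
  have step2 : ∫⁻ ξ, ENNReal.ofReal (f ξ) = ENNReal.ofReal (∫ ξ, f ξ) := by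
    rw [ofReal_integral_eq_lintegral_ofReal Integrable.of_finite
      (Filter.Eventually.of_forall fun ξ => (hf_pos ξ).le)]
  -- Step 3: factor the integral
  have step3 : ∫ ξ, f ξ
      = Real.exp (s * t) * ∏ i, ∫ b : Bool, Real.exp (-(s * (if b then w i else 0))) := by
    rw [hf_def, integral_const_mul]
    congr 1
    have key : ∀ ξ : Fin G → Bool, Real.exp (-(s * S ξ))
        = ∏ i, Real.exp (-(s * (if ξ i then w i else 0))) := by
      intro ξ
      rw [← Real.exp_sum, hS_def]
      congr 1
      simp [Finset.mul_sum]
    simp_rw [key]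
    exact integral_fintype_prod_eq_prod (ι := Fin G)
      (fun i (b : Bool) => Real.exp (-(s * (if b then w i else 0))))
  -- Step 4: per-coordinate integral
  have step4 : ∀ i : Fin G, ∫ b : Bool, Real.exp (-(s * (if b then w i else 0)))
      = (1 / K) * Real.exp (-(s * w i)) + (1 - 1 / K) := by
    intro i
    have hvol : (volume : Measure Bool)
        = (PMF.bernoulli (Real.toNNReal (1 / K)) hle).toMeasure := rfl
    have h2 : ((((1 : NNReal) - Real.toNNReal (1 / K) : NNReal) : ℝ≥0∞)).toReal = 1 - 1 / K := by
      rw [ENNReal.coe_toReal, NNReal.coe_sub hle, NNReal.coe_one, Real.coe_toNNReal _ hp0.le]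
    have h2' : (((Real.toNNReal (1 / K) : NNReal) : ℝ≥0∞)).toReal = 1 / K := by
      rw [ENNReal.coe_toReal, Real.coe_toNNReal _ hp0.le]
    rw [hvol, PMF.integral_eq_sum]
    simp only [Fintype.sum_bool, PMF.bernoulli_apply, cond_true, cond_false, smul_eq_mul,
      Bool.false_eq_true, if_false, if_true, mul_zero, neg_zero, Real.exp_zero, mul_one,
      h2', h2]
  -- Step 5: bound each factor
  have step5 : ∀ i : Fin G, (1 / K) * Real.exp (-(s * w i)) + (1 - 1 / K)
      ≤ Real.exp ((1 / K) * ((s * w i) ^ 2 - s * w i)) := by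
    intro i
    have hx0 : 0 ≤ s * w i := mul_nonneg hs0.le (hw0 i)
    have hquad := exp_neg_le_quad hx0
    have h1 : (1 / K) * Real.exp (-(s * w i)) + (1 - 1 / K)
        ≤ 1 + (1 / K) * ((s * w i) ^ 2 - s * w i) := by nlinarith
    linarith [Real.add_one_le_exp ((1 / K) * ((s * w i) ^ 2 - s * w i))]
  -- Step 6: combine product bound
  have step6 : ∏ i, ((1 / K) * Real.exp (-(s * w i)) + (1 - 1 / K))
      ≤ Real.exp (∑ i, (1 / K) * ((s * w i) ^ 2 - s * w i)) := by
    rw [Real.exp_sum]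
    apply Finset.prod_le_prod
    · intro i _
      have := Real.exp_pos (-(s * w i))
      nlinarith [hp0, hp1]
    · intro i _; exact step5 i
  -- Step 7: numeric bound on the exponent
  have hW2 : ∑ i, (w i) ^ 2 ≤ (OPT / B) * ∑ i, w i := by
    rw [Finset.mul_sum]
    apply Finset.sum_le_sum
    intro i _
    have := hw1 i
    nlinarith [hw0 i]
  have hexpo : s * t + ∑ i, (1 / K) * ((s * w i) ^ 2 - s * w i) ≤ -B / (32 * K) := by
    have hsum_expand : ∑ i, (1 / K) * ((s * w i) ^ 2 - s * w i)
        = (1 / K) * s ^ 2 * (∑ i, (w i) ^ 2) - (1 / K) * s * (∑ i, w i) := by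
      rw [Finset.mul_sum, Finset.mul_sum, ← Finset.sum_sub_distrib]
      exact Finset.sum_congr rfl fun i _ => by ring
    rw [hsum_expand]
    have hW := hsum1
    have key : s ^ 2 * ∑ i, (w i) ^ 2 - s * ∑ i, w i ≤ -(3 * B) / 32 := by
      have h1 : s ^ 2 * ∑ i, (w i) ^ 2 ≤ s ^ 2 * ((OPT / B) * ∑ i, w i) :=
        mul_le_mul_of_nonneg_left hW2 (sq_nonneg s)
      have h2 : s ^ 2 * (OPT / B) = s / 4 := by
        rw [hs_def]; field_simp
      have h4 : s / 4 * ∑ i, w i - s * ∑ i, w i = -(3 / 4 * s) * ∑ i, w i := by ring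
      have h5 : -(3 / 4 * s) * ∑ i, w i ≤ -(3 / 4 * s) * (OPT / 2) :=
        mul_le_mul_of_nonpos_left hW (by linarith)
      have h3 : s * OPT = B / 4 := by rw [hs_def]; field_simp
      nlinarith
    have hst : s * t = B / (16 * K) := by
      rw [hs_def, ht_def]; field_simp; ring
    rw [hst]
    have h6 : (1 / K) * (s ^ 2 * (∑ i, (w i) ^ 2) - s * ∑ i, w i)
        ≤ (1 / K) * (-(3 * B) / 32) :=
      mul_le_mul_of_nonneg_left key hp0.le
    have h6' : (1 / K) * s ^ 2 * (∑ i, (w i) ^ 2) - (1 / K) * s * (∑ i, w i)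
        = (1 / K) * (s ^ 2 * (∑ i, (w i) ^ 2) - s * ∑ i, w i) := by ring
    have h7 : B / (16 * K) + (1 / K) * (-(3 * B) / 32) = -B / (32 * K) := by
      field_simp; ring
    linarith
  -- Final assembly
  have final : Real.exp (s * t) * ∏ i, ((1 / K) * Real.exp (-(s * w i)) + (1 - 1 / K))
      ≤ 2 * Real.exp (-(3 * B) / (104 * K)) := by
    have h1 : Real.exp (s * t) * ∏ i, ((1 / K) * Real.exp (-(s * w i)) + (1 - 1 / K))
        ≤ Real.exp (s * t) * Real.exp (∑ i, (1 / K) * ((s * w i) ^ 2 - s * w i)) :=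
      mul_le_mul_of_nonneg_left step6 (Real.exp_pos _).le
    rw [← Real.exp_add] at h1
    have h2 : Real.exp (s * t + ∑ i, (1 / K) * ((s * w i) ^ 2 - s * w i))
        ≤ Real.exp (-(3 * B) / (104 * K)) := by
      apply Real.exp_le_exp.mpr
      have h8 : -B / (32 * K) ≤ -(3 * B) / (104 * K) := by
        rw [div_le_div_iff₀ (by positivity) (by positivity)]
        nlinarith
      linarith [hexpo]
    have h3 := Real.exp_pos (-(3 * B) / (104 * K))
    linarith
  show (volume : Measure (Fin G → Bool)) {ξ | S ξ < t}
      ≤ ENNReal.ofReal (2 * Real.exp (-(3 * B) / (104 * K)))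
  calc (volume : Measure (Fin G → Bool)) {ξ | S ξ < t}
      ≤ ∫⁻ ξ, ENNReal.ofReal (f ξ) := step1
    _ = ENNReal.ofReal (∫ ξ, f ξ) := step2
    _ = ENNReal.ofReal (Real.exp (s * t)
          * ∏ i, ∫ b : Bool, Real.exp (-(s * (if b then w i else 0)))) := by rw [step3]
    _ = ENNReal.ofReal (Real.exp (s * t)
          * ∏ i, ((1 / K) * Real.exp (-(s * w i)) + (1 - 1 / K))) := by
        congr 1; congr 1; exact Finset.prod_congr rfl fun i _ => step4 i
    _ ≤ ENNReal.ofReal (2 * Real.exp (-(3 * B) / (104 * K))) :=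
        ENNReal.ofReal_le_ofReal final
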